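/- Let f, g : ℝ → ℝ be continuous, t ∈ ℝ and H ∈ (0,1]. Suppose that for every ε ∈ (0,H) there exist C_ε > 0 and ρ_ε > 0 such that |f(u) − f(v)| ≤ C_ε |u − v|^{H−ε} + C_ε |g(u) − g(v)| for all u, v ∈ B(t,ρ_ε). Then the local parabolic Hausdorff dimensions of the graphs satisfy lim_{ρ→0⁺} dimH(Gr(f,[t−ρ,t+ρ]); ϱ_H) ≤ lim_{ρ→0⁺} dimH(Gr(g,[t−ρ,t+ρ]); ϱ_H). -/

import Mathlib

open Filter MeasureTheory Set Topology
open scoped ENNReal NNReal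

/-- The parabolic metric `ϱ_H((u,x),(v,y)) = max(|u−v|^H, |x−y|)` on `ℝ²`. -/
noncomputable def pDist (H : ℝ) (p q : ℝ × ℝ) : ℝ :=
  max (|p.1 - q.1| ^ H) |p.2 - q.2|

/-- Diameter of a set with respect to the parabolic metric `ϱ_H` (in `ℝ≥0∞`). -/
noncomputable def pDiam (H : ℝ) (S : Set (ℝ × ℝ)) : ℝ≥0∞ :=
  ⨆ (p : ℝ × ℝ) (_ : p ∈ S) (q : ℝ × ℝ) (_ : q ∈ S), ENNReal.ofReal (pDist H p q)

/-- `A` is null for the `s`-dimensional Hausdorff measure in the parabolic metric `ϱ_H`: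
for every `ε > 0` there is a countable cover of `A` by sets of `ϱ_H`-diameter at most `ε`
whose sum of `s`-th powers of diameters is less than `ε`. -/
def pNull (H s : ℝ) (A : Set (ℝ × ℝ)) : Prop :=
  ∀ ε : ℝ, 0 < ε → ∃ U : ℕ → Set (ℝ × ℝ), A ⊆ ⋃ n, U n ∧
    (∀ n, pDiam H (U n) ≤ ENNReal.ofReal ε) ∧
    (∑' n, pDiam H (U n) ^ s) < ENNReal.ofReal ε

/-- The Hausdorff dimension of `A ⊆ ℝ²` computed in the parabolic metric `ϱ_H`:
the infimum of the nonnegative exponents `s` for which the `s`-dimensional parabolic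
Hausdorff measure of `A` vanishes. -/
noncomputable def pDimH (H : ℝ) (A : Set (ℝ × ℝ)) : ℝ :=
  sInf {s : ℝ | 0 ≤ s ∧ pNull H s A}

/-- The graph of `f : ℝ → ℝ` over `V ⊆ ℝ`, as a subset of `ℝ²`. -/
def graphP (f : ℝ → ℝ) (V : Set ℝ) : Set (ℝ × ℝ) := {p | ∃ u ∈ V, p = (u, f u)}

/-- The local parabolic Hausdorff dimension of the graph of `f` at `t`:
`lim_{ρ→0⁺} dimH(Gr(f,[t−ρ,t+ρ]); ϱ_H)`; since the inner quantity is nondecreasing in `ρ`,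
the limit is the infimum over `ρ > 0`. -/
noncomputable def pDimGraphLoc (H : ℝ) (f : ℝ → ℝ) (t : ℝ) : ℝ :=
  sInf {x : ℝ | ∃ ρ > (0 : ℝ), x = pDimH H (graphP f (Icc (t - ρ) (t + ρ)))}

/- ### Auxiliary lemmas -/

lemma pDist_nonneg (H : ℝ) (p q : ℝ × ℝ) : 0 ≤ pDist H p q :=
  le_trans (Real.rpow_nonneg (abs_nonneg _) _) (le_max_left _ _)

lemma pDiam_le' {H : ℝ} {S : Set (ℝ × ℝ)} {c : ℝ≥0∞}
    (h : ∀ p ∈ S, ∀ q ∈ S, ENNReal.ofReal (pDist H p q) ≤ c) : pDiam H S ≤ c :=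
  iSup_le fun p => iSup_le fun hp => iSup_le fun q => iSup_le fun hq => h p hp q hq

lemma pDiam_le {H : ℝ} {S : Set (ℝ × ℝ)} {r : ℝ}
    (h : ∀ p ∈ S, ∀ q ∈ S, pDist H p q ≤ r) : pDiam H S ≤ ENNReal.ofReal r :=
  pDiam_le' fun p hp q hq => ENNReal.ofReal_le_ofReal (h p hp q hq)

lemma le_pDiam {H : ℝ} {S : Set (ℝ × ℝ)} {p q : ℝ × ℝ} (hp : p ∈ S) (hq : q ∈ S) :
    ENNReal.ofReal (pDist H p q) ≤ pDiam H S :=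
  le_iSup₂_of_le p hp (le_iSup₂_of_le q hq le_rfl)

lemma pDiam_empty (H : ℝ) : pDiam H (∅ : Set (ℝ × ℝ)) = 0 := by
  simp [pDiam]

lemma pDimH_nonneg (H : ℝ) (A : Set (ℝ × ℝ)) : 0 ≤ pDimH H A := by
  unfold pDimH
  rcases Set.eq_empty_or_nonempty {s : ℝ | 0 ≤ s ∧ pNull H s A} with h | h
  · rw [h, Real.sInf_empty]
  · exact le_csInf h fun x hx => hx.1

lemma pDimH_le {H s : ℝ} {A : Set (ℝ × ℝ)} (h0 : 0 ≤ s) (h : pNull H s A) :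
    pDimH H A ≤ s :=
  csInf_le ⟨0, fun x hx => hx.1⟩ ⟨h0, h⟩

lemma exists_pNull_lt {H : ℝ} {A : Set (ℝ × ℝ)}
    (hne : {s : ℝ | 0 ≤ s ∧ pNull H s A}.Nonempty) {b : ℝ} (hb : pDimH H A < b) :
    ∃ s', (0 ≤ s' ∧ pNull H s' A) ∧ s' < b :=
  exists_lt_of_csInf_lt hne hb

lemma pDimGraphLoc_le {H : ℝ} {f : ℝ → ℝ} {t ρ : ℝ} (hρ : 0 < ρ) :
    pDimGraphLoc H f t ≤ pDimH H (graphP f (Icc (t - ρ) (t + ρ))) := by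
  refine csInf_le ⟨0, ?_⟩ ⟨ρ, hρ, rfl⟩
  rintro x ⟨ρ', hρ', rfl⟩
  exact pDimH_nonneg H _

set_option maxHeartbeats 2000000 in
/-- Any set contained in the square `[-R,R]²` is `pNull` for the exponent `1/H + 3`. -/
lemma pNull_of_bddAbs {H : ℝ} (hH0 : 0 < H) {A : Set (ℝ × ℝ)} {R : ℝ} (hR : 0 < R)
    (hA : ∀ p ∈ A, |p.1| ≤ R ∧ |p.2| ≤ R) : pNull H (1/H + 3) A := by
  classical
  intro ε hε
  set s : ℝ := 1/H + 3 with hs_def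
  have hs_pos : 0 < s := by positivity
  set P : ℝ := (2*R + 2)^2 with hP_def
  have hP : 0 < P := by positivity
  set ε₀ : ℝ := min ε (min 1 (1/(P+1))) with hε₀_def
  have hε₀ : 0 < ε₀ := lt_min hε (lt_min one_pos (by positivity))
  have hε₀ε : ε₀ ≤ ε := min_le_left _ _
  have hε₀1 : ε₀ ≤ 1 := le_trans (min_le_right _ _) (min_le_left _ _)
  have hε₀P : ε₀ ≤ 1/(P+1) := le_trans (min_le_right _ _) (min_le_right _ _)
  set w : ℝ := ε₀ ^ (1/H) with hw_def
  have hw : 0 < w := Real.rpow_pos_of_pos hε₀ _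
  have hwH : w ^ H = ε₀ := by
    rw [hw_def, ← Real.rpow_mul hε₀.le, one_div_mul_cancel hH0.ne', Real.rpow_one]
  have hw1 : w ≤ 1 := Real.rpow_le_one hε₀.le hε₀1 (by positivity)
  set N : ℕ := ⌈2*R/w⌉₊ with hN_def
  set M : ℕ := ⌈2*R/ε₀⌉₊ with hM_def
  set box : ℕ × ℕ → Set (ℝ × ℝ) := fun ij =>
    if ij.1 ≤ N ∧ ij.2 ≤ M then
      Icc (-R + ij.1*w) (-R + (ij.1+1)*w) ×ˢ Icc (-R + ij.2*ε₀) (-R + (ij.2+1)*ε₀)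
    else ∅ with hbox_def
  set e : ℕ ≃ ℕ × ℕ := (Denumerable.eqv (ℕ × ℕ)).symm with he_def
  -- diameter of every box is at most ε₀
  have hdiam : ∀ ij : ℕ × ℕ, pDiam H (box ij) ≤ ENNReal.ofReal ε₀ := by
    intro ij
    by_cases hij : ij.1 ≤ N ∧ ij.2 ≤ M
    · refine pDiam_le ?_
      intro p hp q hq
      simp only [hbox_def] at hp hq
      simp only [if_pos hij, Set.mem_prod, Set.mem_Icc] at hp hq
      have h1 : |p.1 - q.1| ≤ w := by
        rw [abs_sub_le_iff]
        constructor <;> nlinarith [hp.1.1, hp.1.2, hq.1.1, hq.1.2]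
      have h2 : |p.2 - q.2| ≤ ε₀ := by
        rw [abs_sub_le_iff]
        constructor <;> nlinarith [hp.2.1, hp.2.2, hq.2.1, hq.2.2]
      have h1' : |p.1 - q.1| ^ H ≤ ε₀ := by
        rw [← hwH]; exact Real.rpow_le_rpow (abs_nonneg _) h1 hH0.le
      exact max_le h1' h2
    · simp only [hbox_def, if_neg hij]
      rw [pDiam_empty]; exact zero_le
  refine ⟨fun n => box (e n), ?_, ?_, ?_⟩
  · -- coverage
    intro p hp
    obtain ⟨h1, h2⟩ := hA p hp
    obtain ⟨h1a, h1b⟩ := abs_le.mp h1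
    obtain ⟨h2a, h2b⟩ := abs_le.mp h2
    set i : ℕ := ⌊(p.1 + R)/w⌋₊ with hi_def
    set j : ℕ := ⌊(p.2 + R)/ε₀⌋₊ with hj_def
    have hx0 : 0 ≤ (p.1 + R)/w := div_nonneg (by linarith) hw.le
    have hy0 : 0 ≤ (p.2 + R)/ε₀ := div_nonneg (by linarith) hε₀.le
    have hx2 : (p.1 + R)/w ≤ 2*R/w := by
      rw [div_le_div_iff₀ hw hw]
      exact mul_le_mul_of_nonneg_right (by linarith) hw.le
    have hy2 : (p.2 + R)/ε₀ ≤ 2*R/ε₀ := by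
      rw [div_le_div_iff₀ hε₀ hε₀]
      exact mul_le_mul_of_nonneg_right (by linarith) hε₀.le
    have hiN : i ≤ N := le_trans (Nat.floor_le_floor hx2) (Nat.floor_le_ceil _)
    have hjM : j ≤ M := le_trans (Nat.floor_le_floor hy2) (Nat.floor_le_ceil _)
    have hfl : (i:ℝ) * w ≤ p.1 + R := by
      calc (i:ℝ) * w ≤ ((p.1 + R)/w) * w :=
            mul_le_mul_of_nonneg_right (Nat.floor_le hx0) hw.le
      _ = p.1 + R := div_mul_cancel₀ _ hw.ne'
    have hfu : p.1 + R < ((i:ℝ)+1) * w := by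
      calc p.1 + R = ((p.1 + R)/w) * w := (div_mul_cancel₀ _ hw.ne').symm
      _ < ((i:ℝ)+1) * w := mul_lt_mul_of_pos_right (Nat.lt_floor_add_one _) hw
    have hgl : (j:ℝ) * ε₀ ≤ p.2 + R := by
      calc (j:ℝ) * ε₀ ≤ ((p.2 + R)/ε₀) * ε₀ :=
            mul_le_mul_of_nonneg_right (Nat.floor_le hy0) hε₀.le
      _ = p.2 + R := div_mul_cancel₀ _ hε₀.ne'
    have hgu : p.2 + R < ((j:ℝ)+1) * ε₀ := by
      calc p.2 + R = ((p.2 + R)/ε₀) * ε₀ := (div_mul_cancel₀ _ hε₀.ne').symm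
      _ < ((j:ℝ)+1) * ε₀ := mul_lt_mul_of_pos_right (Nat.lt_floor_add_one _) hε₀
    refine Set.mem_iUnion.mpr ⟨e.symm (i, j), ?_⟩
    simp only [Equiv.apply_symm_apply, hbox_def]
    rw [if_pos (⟨hiN, hjM⟩ : (i, j).1 ≤ N ∧ (i, j).2 ≤ M)]
    exact Set.mem_prod.mpr ⟨Set.mem_Icc.mpr ⟨by linarith, by linarith⟩,
      Set.mem_Icc.mpr ⟨by linarith, by linarith⟩⟩
  · intro n
    exact le_trans (hdiam (e n)) (ENNReal.ofReal_le_ofReal hε₀ε)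
  · -- sum estimate
    rw [e.tsum_eq (fun ij => pDiam H (box ij) ^ s)]
    have hzero : ∀ ij ∉ (Finset.range (N+1) ×ˢ Finset.range (M+1)),
        pDiam H (box ij) ^ s = 0 := by
      intro ij hij
      have hij' : ¬(ij.1 ≤ N ∧ ij.2 ≤ M) := by
        simpa [Finset.mem_product, Finset.mem_range, Nat.lt_succ_iff] using hij
      simp only [hbox_def, if_neg hij']
      rw [pDiam_empty, ENNReal.zero_rpow_of_pos hs_pos]
    rw [tsum_eq_sum hzero]
    have hterm : ∀ ij ∈ (Finset.range (N+1) ×ˢ Finset.range (M+1)),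
        pDiam H (box ij) ^ s ≤ ENNReal.ofReal (ε₀ ^ s) := by
      intro ij _
      calc pDiam H (box ij) ^ s ≤ (ENNReal.ofReal ε₀) ^ s :=
            ENNReal.rpow_le_rpow (hdiam ij) hs_pos.le
      _ = ENNReal.ofReal (ε₀ ^ s) := ENNReal.ofReal_rpow_of_pos hε₀
    have hcard : ((Finset.range (N+1) ×ˢ Finset.range (M+1)).card : ℕ) = (N+1)*(M+1) := by
      rw [Finset.card_product, Finset.card_range, Finset.card_range]
    have hNle : (N:ℝ) + 1 ≤ (2*R+2)/w := by
      have h1 : (N:ℝ) < 2*R/w + 1 := Nat.ceil_lt_add_one (by positivity)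
      have h2 : (2:ℝ) ≤ 2/w := by
        rw [le_div_iff₀ hw]; linarith
      have h3 : 2*R/w + 2/w = (2*R+2)/w := by ring
      linarith
    have hMle : (M:ℝ) + 1 ≤ (2*R+2)/ε₀ := by
      have h1 : (M:ℝ) < 2*R/ε₀ + 1 := Nat.ceil_lt_add_one (by positivity)
      have h2 : (2:ℝ) ≤ 2/ε₀ := by
        rw [le_div_iff₀ hε₀]; linarith
      have h3 : 2*R/ε₀ + 2/ε₀ = (2*R+2)/ε₀ := by ring
      linarith
    have hεs : ε₀ ^ s = w * ε₀^(3:ℕ) := by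
      rw [hs_def, Real.rpow_add hε₀, hw_def]
      norm_num
    have hrealineq : (((N+1)*(M+1) : ℕ) : ℝ) * ε₀ ^ s < ε := by
      have hmul : ((N:ℝ)+1) * ((M:ℝ)+1) * ε₀^s ≤ ((2*R+2)/w) * ((2*R+2)/ε₀) * (w * ε₀^(3:ℕ)) := by
        rw [hεs]
        exact mul_le_mul (mul_le_mul hNle hMle (by positivity) (by positivity))
          le_rfl (by positivity) (by positivity)
      have heq : ((2*R+2)/w) * ((2*R+2)/ε₀) * (w * ε₀^(3:ℕ)) = P * ε₀^2 := by
        rw [hP_def]; field_simp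
      have h' : ε₀ * (P+1) ≤ 1 := (le_div_iff₀ (by positivity)).mp hε₀P
      have hfin : P * ε₀^2 < ε := by
        nlinarith [mul_le_mul_of_nonneg_left h' hε₀.le, hε₀, hε₀ε, hP]
      push_cast
      nlinarith [hmul, heq, hfin]
    calc (∑ ij ∈ (Finset.range (N+1) ×ˢ Finset.range (M+1)), pDiam H (box ij) ^ s)
        ≤ (Finset.range (N+1) ×ˢ Finset.range (M+1)).card • ENNReal.ofReal (ε₀ ^ s) :=
          Finset.sum_le_card_nsmul _ _ _ hterm
      _ = (((N+1)*(M+1) : ℕ) : ℝ≥0∞) * ENNReal.ofReal (ε₀ ^ s) := by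
          rw [hcard, nsmul_eq_mul]
      _ = ENNReal.ofReal ((((N+1)*(M+1) : ℕ) : ℝ) * ε₀ ^ s) := by
          rw [ENNReal.ofReal_mul (by positivity), ENNReal.ofReal_natCast]
      _ < ENNReal.ofReal ε := (ENNReal.ofReal_lt_ofReal_iff hε).mpr hrealineq

set_option maxHeartbeats 2000000 in
/-- If for every `ε ∈ (0,H)` one has `|f u − f v| ≤ C_ε |u−v|^{H−ε} + C_ε |g u − g v|` near
`t`, then the local parabolic Hausdorff dimension of the graph of `f` at `t` is at most that
of the graph of `g`. -/
theorem stmt_11 (f g : ℝ → ℝ) (hf : Continuous f) (hg : Continuous g) (t H : ℝ)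
    (hH0 : 0 < H) (hH1 : H ≤ 1)
    (hbound : ∀ ε : ℝ, 0 < ε → ε < H → ∃ C > (0 : ℝ), ∃ ρ > (0 : ℝ),
      ∀ u ∈ Metric.ball t ρ, ∀ v ∈ Metric.ball t ρ,
        |f u - f v| ≤ C * |u - v| ^ (H - ε) + C * |g u - g v|) :
    pDimGraphLoc H f t ≤ pDimGraphLoc H g t := by
  refine le_csInf ⟨pDimH H (graphP g (Icc (t-1) (t+1))), 1, one_pos, rfl⟩ ?_
  rintro b ⟨ρg, hρg, rfl⟩
  have hDg0 : 0 ≤ pDimH H (graphP g (Icc (t - ρg) (t + ρg))) := pDimH_nonneg H _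
  -- the graph of g over the compact interval is bounded
  obtain ⟨Rg, hRg, hRgA⟩ : ∃ R > (0:ℝ), ∀ p ∈ graphP g (Icc (t - ρg) (t + ρg)),
      |p.1| ≤ R ∧ |p.2| ≤ R := by
    obtain ⟨Cg, hCg⟩ := (isCompact_Icc (a := t - ρg) (b := t + ρg)).exists_bound_of_continuousOn
      hg.continuousOn
    refine ⟨|t - ρg| + |t + ρg| + |Cg| + 1, by positivity, ?_⟩
    rintro p ⟨u, hu, rfl⟩
    have h1 := hu.1
    have h2 := hu.2
    have hn1 := neg_abs_le (t - ρg)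
    have hn2 := le_abs_self (t + ρg)
    have hgc := hCg u hu
    rw [Real.norm_eq_abs] at hgc
    constructor
    · rw [abs_le]
      constructor
      · have := abs_nonneg (t + ρg); have := abs_nonneg Cg; linarith
      · have := abs_nonneg (t - ρg); have := abs_nonneg Cg; linarith
    · have := le_abs_self Cg
      have := abs_nonneg (t - ρg); have := abs_nonneg (t + ρg)
      simp only
      have := abs_nonneg (g u)
      linarith [hgc]
  have hSg_ne : Set.Nonempty {s : ℝ | 0 ≤ s ∧ pNull H s (graphP g (Icc (t - ρg) (t + ρg)))} :=
    ⟨1/H + 3, by positivity, pNull_of_bddAbs hH0 hRg hRgA⟩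
  refine le_of_forall_sub_le fun δ hδ => ?_
  rw [sub_le_iff_le_add]
  -- pick an exponent s' with pNull for g, slightly above the dimension
  obtain ⟨s', ⟨hs'0, hs'null⟩, hs'lt⟩ := exists_pNull_lt hSg_ne
    (show pDimH H (graphP g (Icc (t - ρg) (t + ρg))) <
      pDimH H (graphP g (Icc (t - ρg) (t + ρg))) + δ/2 by linarith)
  set Dg := pDimH H (graphP g (Icc (t - ρg) (t + ρg))) with hDg_def
  set sf : ℝ := Dg + δ with hsf_def
  have hsf : 0 < sf := by rw [hsf_def]; linarith
  have hs'sf : s' < sf := by rw [hsf_def]; linarith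
  have hdivnn : 0 ≤ s'/sf := div_nonneg hs'0 hsf.le
  have hdivlt : s'/sf < 1 := (div_lt_one hsf).mpr hs'sf
  set γ : ℝ := (s'/sf + 1)/2 with hγ_def
  have hγ0 : 0 < γ := by rw [hγ_def]; linarith
  have hγ1 : γ < 1 := by rw [hγ_def]; linarith
  have hγsf : s' < γ * sf := by
    have hx : s'/sf < γ := by rw [hγ_def]; linarith
    calc s' = s'/sf * sf := by field_simp
    _ < γ * sf := mul_lt_mul_of_pos_right hx hsf
  set εH : ℝ := H * (1 - γ) with hεH_def
  have hεH0 : 0 < εH := by rw [hεH_def]; apply mul_pos hH0; linarith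
  have hεHH : εH < H := by rw [hεH_def]; nlinarith
  have hHγ : H - εH = H * γ := by rw [hεH_def]; ring
  obtain ⟨C, hC, ρ, hρ, hb⟩ := hbound εH hεH0 hεHH
  set ρf : ℝ := min ρ ρg / 2 with hρf_def
  have hminpos : 0 < min ρ ρg := lt_min hρ hρg
  have hρf : 0 < ρf := by rw [hρf_def]; linarith
  have hρfρ : ρf < ρ := by
    have := min_le_left ρ ρg
    rw [hρf_def]; linarith
  have hρfρg : ρf ≤ ρg := by
    have := min_le_right ρ ρg
    rw [hρf_def]; linarith
  have hIfball : ∀ u ∈ Icc (t - ρf) (t + ρf), u ∈ Metric.ball t ρ := by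
    intro u hu
    rw [Metric.mem_ball, Real.dist_eq, abs_sub_lt_iff]
    exact ⟨by linarith [hu.2], by linarith [hu.1]⟩
  have hIfIg : Icc (t - ρf) (t + ρf) ⊆ Icc (t - ρg) (t + ρg) :=
    Icc_subset_Icc (by linarith) (by linarith)
  -- the key transfer: the graph of f over the small interval is pNull for exponent sf
  have key : pNull H sf (graphP f (Icc (t - ρf) (t + ρf))) := by
    intro ε hε
    set Pc : ℝ := 1 + 2*C with hPc_def
    have hPc1 : (1:ℝ) ≤ Pc := by rw [hPc_def]; linarith
    have hPc0 : (0:ℝ) < Pc := by linarith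
    set Pp : ℝ := Pc ^ sf with hPp_def
    have hPp : 0 < Pp := Real.rpow_pos_of_pos hPc0 _
    set m : ℝ := (ε / Pc) ^ (1/γ) with hm_def
    have hm : 0 < m := Real.rpow_pos_of_pos (by positivity) _
    set ε' : ℝ := min 1 (min (ε / (2*Pp)) m) with hε'_def
    have hε'0 : 0 < ε' := lt_min one_pos (lt_min (by positivity) hm)
    have hε'1 : ε' ≤ 1 := min_le_left _ _
    have hε'P : ε' ≤ ε/(2*Pp) := le_trans (min_le_right _ _) (min_le_left _ _)
    have hε'm : ε' ≤ m := le_trans (min_le_right _ _) (min_le_right _ _)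
    obtain ⟨U, hUcov, hUdiam, hUsum⟩ := hs'null ε' hε'0
    set V : ℕ → Set (ℝ × ℝ) :=
      fun n => {p | ∃ u, u ∈ Icc (t - ρf) (t + ρf) ∧ (u, g u) ∈ U n ∧ p = (u, f u)} with hV_def
    have hUdiam1 : ∀ n, pDiam H (U n) ≤ 1 := fun n =>
      le_trans (hUdiam n) (ENNReal.ofReal_le_one.mpr hε'1)
    -- per-set diameter bound
    have hVdiam : ∀ n, pDiam H (V n) ≤ ENNReal.ofReal Pc * pDiam H (U n) ^ γ := by
      intro n
      refine pDiam_le' ?_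
      rintro p ⟨u, hu, hun, rfl⟩ q ⟨v, hv, hvn, rfl⟩
      set d : ℝ := max (|u - v| ^ H) |g u - g v| with hd_def
      have hd0 : 0 ≤ d := by
        rw [hd_def]
        exact le_trans (Real.rpow_nonneg (abs_nonneg _) _) (le_max_left _ _)
      have hdU : ENNReal.ofReal d ≤ pDiam H (U n) := by
        rw [hd_def]; exact le_pDiam hun hvn
      have hd1 : d ≤ 1 := ENNReal.ofReal_le_one.mp (le_trans hdU (hUdiam1 n))
      have haH : |u - v| ^ H ≤ d := by rw [hd_def]; exact le_max_left _ _
      have hgd : |g u - g v| ≤ d := by rw [hd_def]; exact le_max_right _ _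
      have hdγ0 : 0 ≤ d ^ γ := Real.rpow_nonneg hd0 _
      have hddγ : d ≤ d ^ γ := by
        rcases eq_or_lt_of_le hd0 with h | h
        · rw [← h]; exact Real.rpow_nonneg le_rfl _
        · calc d = d ^ (1:ℝ) := (Real.rpow_one d).symm
          _ ≤ d ^ γ := Real.rpow_le_rpow_of_exponent_ge h hd1 hγ1.le
      have hfuv : |f u - f v| ≤ C * d ^ γ + C * d := by
        have hest := hb u (hIfball u hu) v (hIfball v hv)
        have h2 : |u - v| ^ (H - εH) ≤ d ^ γ := by
          rw [hHγ, Real.rpow_mul (abs_nonneg _)]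
          exact Real.rpow_le_rpow (Real.rpow_nonneg (abs_nonneg _) _) haH hγ0.le
        calc |f u - f v| ≤ C * |u - v| ^ (H - εH) + C * |g u - g v| := hest
        _ ≤ C * d ^ γ + C * d :=
          add_le_add (mul_le_mul_of_nonneg_left h2 hC.le) (mul_le_mul_of_nonneg_left hgd hC.le)
      have hreal : max (|u - v| ^ H) |f u - f v| ≤ Pc * d ^ γ := by
        apply max_le
        · calc |u - v| ^ H ≤ d := haH
          _ ≤ d ^ γ := hddγ
          _ ≤ Pc * d ^ γ := by nlinarith
        · calc |f u - f v| ≤ C * d ^ γ + C * d := hfuv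
          _ ≤ Pc * d ^ γ := by nlinarith [mul_le_mul_of_nonneg_left hddγ hC.le]
      show ENNReal.ofReal (pDist H (u, f u) (v, f v)) ≤ ENNReal.ofReal Pc * pDiam H (U n) ^ γ
      calc ENNReal.ofReal (pDist H (u, f u) (v, f v))
          ≤ ENNReal.ofReal (Pc * d ^ γ) := ENNReal.ofReal_le_ofReal hreal
        _ = ENNReal.ofReal Pc * ENNReal.ofReal (d ^ γ) := ENNReal.ofReal_mul hPc0.le
        _ = ENNReal.ofReal Pc * ENNReal.ofReal d ^ γ := by
            rw [ENNReal.ofReal_rpow_of_nonneg hd0 hγ0.le]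
        _ ≤ ENNReal.ofReal Pc * pDiam H (U n) ^ γ :=
            mul_le_mul_right (ENNReal.rpow_le_rpow hdU hγ0.le) _
    refine ⟨V, ?_, ?_, ?_⟩
    · rintro p ⟨u, hu, rfl⟩
      have hmem : (u, g u) ∈ graphP g (Icc (t - ρg) (t + ρg)) := ⟨u, hIfIg hu, rfl⟩
      obtain ⟨n, hn⟩ := Set.mem_iUnion.mp (hUcov hmem)
      exact Set.mem_iUnion.mpr ⟨n, u, hu, hn, rfl⟩
    · intro n
      calc pDiam H (V n) ≤ ENNReal.ofReal Pc * pDiam H (U n) ^ γ := hVdiam n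
      _ ≤ ENNReal.ofReal Pc * (ENNReal.ofReal ε') ^ γ :=
          mul_le_mul_right (ENNReal.rpow_le_rpow (hUdiam n) hγ0.le) _
      _ = ENNReal.ofReal (Pc * ε' ^ γ) := by
          rw [ENNReal.ofReal_rpow_of_pos hε'0, ← ENNReal.ofReal_mul hPc0.le]
      _ ≤ ENNReal.ofReal ε := by
          apply ENNReal.ofReal_le_ofReal
          have h1 : ε' ^ γ ≤ m ^ γ := Real.rpow_le_rpow hε'0.le hε'm hγ0.le
          have h2 : m ^ γ = ε / Pc := by
            rw [hm_def, ← Real.rpow_mul (by positivity), one_div_mul_cancel hγ0.ne',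
              Real.rpow_one]
          calc Pc * ε' ^ γ ≤ Pc * (ε/Pc) :=
                mul_le_mul_of_nonneg_left (h1.trans h2.le) hPc0.le
          _ = ε := by field_simp
    · -- sum estimate
      have hstep : ∀ n, pDiam H (V n) ^ sf ≤ ENNReal.ofReal Pp * pDiam H (U n) ^ s' := by
        intro n
        calc pDiam H (V n) ^ sf ≤ (ENNReal.ofReal Pc * pDiam H (U n) ^ γ) ^ sf :=
              ENNReal.rpow_le_rpow (hVdiam n) hsf.le
        _ = ENNReal.ofReal Pc ^ sf * (pDiam H (U n) ^ γ) ^ sf :=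
              ENNReal.mul_rpow_of_nonneg _ _ hsf.le
        _ = ENNReal.ofReal Pc ^ sf * pDiam H (U n) ^ (γ * sf) := by
              rw [← ENNReal.rpow_mul]
        _ ≤ ENNReal.ofReal Pc ^ sf * pDiam H (U n) ^ s' :=
              mul_le_mul_right (ENNReal.rpow_le_rpow_of_exponent_ge (hUdiam1 n) hγsf.le) _
        _ = ENNReal.ofReal Pp * pDiam H (U n) ^ s' := by
              rw [hPp_def, ENNReal.ofReal_rpow_of_pos hPc0]
      calc (∑' n, pDiam H (V n) ^ sf) ≤ ∑' n, ENNReal.ofReal Pp * pDiam H (U n) ^ s' :=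
            ENNReal.tsum_le_tsum hstep
      _ = ENNReal.ofReal Pp * ∑' n, pDiam H (U n) ^ s' := ENNReal.tsum_mul_left
      _ ≤ ENNReal.ofReal Pp * ENNReal.ofReal ε' := mul_le_mul_right hUsum.le _
      _ = ENNReal.ofReal (Pp * ε') := (ENNReal.ofReal_mul hPp.le).symm
      _ ≤ ENNReal.ofReal (ε/2) := ENNReal.ofReal_le_ofReal (by
            calc Pp * ε' ≤ Pp * (ε/(2*Pp)) := mul_le_mul_of_nonneg_left hε'P hPp.le
            _ = ε/2 := by field_simp)
      _ < ENNReal.ofReal ε := (ENNReal.ofReal_lt_ofReal_iff hε).mpr (by linarith)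
  -- conclude
  have h1 : pDimGraphLoc H f t ≤ pDimH H (graphP f (Icc (t - ρf) (t + ρf))) :=
    pDimGraphLoc_le hρf
  have h2 : pDimH H (graphP f (Icc (t - ρf) (t + ρf))) ≤ sf :=
    pDimH_le (by rw [hsf_def]; linarith) key
  rw [hsf_def] at h2
  linarith
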